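/- arXiv:2412.09837 — 4 statements merged into one kernel-verified Lean document; each statement's English description precedes it below -/
import Mathlib

section
/- If G and H are finite connected graphs of order at least three that both contain at least one leaf, then mp(G □ H) ≥ max{Δ₁(G), Δ₁(H)}, where Δ₁(G) is the maximum, over all vertices u of G, of the number of leaves of G adjacent to u. -/
open SimpleGraph

/-- A walk is *monophonic* if it is an induced path: it is a path and the only
edges of the graph between vertices of the walk are the edges of the walk. -/
def SimpleGraph.Walk.IsMonophonic {V : Type*} {G : SimpleGraph V} {u v : V}
    (p : G.Walk u v) : Prop :=
  p.IsPath ∧ ∀ a b : V, a ∈ p.support → b ∈ p.support → G.Adj a b → p.toSubgraph.Adj a b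

/-- A set `S` is a *monophonic position set* if no monophonic path contains
more than two vertices of `S`. -/
def SimpleGraph.IsMPSet {V : Type*} (G : SimpleGraph V) (S : Set V) : Prop :=
  ∀ ⦃u v : V⦄ (p : G.Walk u v), p.IsMonophonic → ({x ∈ S | x ∈ p.support}).ncard ≤ 2

/-- The *monophonic position number*: the largest cardinality of a monophonic
position set. -/
noncomputable def SimpleGraph.mpNum {V : Type*} (G : SimpleGraph V) : ℕ :=
  sSup {n | ∃ S : Set V, G.IsMPSet S ∧ S.ncard = n}

/-- A vertex is a *leaf* if it has exactly one neighbour. -/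
def SimpleGraph.IsLeaf {V : Type*} (G : SimpleGraph V) (w : V) : Prop :=
  (G.neighborSet w).ncard = 1

/-- `Δ₁(G)`: the maximum, over vertices `u`, of the number of leaves adjacent to `u`. -/
noncomputable def SimpleGraph.maxLeafDegree {V : Type*} [Fintype V] (G : SimpleGraph V) : ℕ :=
  Finset.univ.sup fun u : V => ({w : V | G.Adj u w ∧ G.IsLeaf w}).ncard

section Aux

variable {V : Type*} {G : SimpleGraph V}

lemma getVert_injOn_aux {u v : V} {p : G.Walk u v} (hp : p.IsPath) :
    ∀ i j, i ≤ p.length → j ≤ p.length → p.getVert i = p.getVert j → i = j := by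
  induction p with
  | nil => intro i j hi hj _; simp_all
  | @cons a b c h q ih =>
    intro i j hi hj heq
    have hq := (Walk.cons_isPath_iff h q).mp hp
    match i, j with
    | 0, 0 => rfl
    | 0, j + 1 =>
      exfalso
      rw [Walk.getVert_cons_succ] at heq
      rw [Walk.getVert_zero] at heq
      exact hq.2 (Walk.mem_support_iff_exists_getVert.mpr
        ⟨j, heq.symm, by simpa using hj⟩)
    | i + 1, 0 =>
      exfalso
      rw [Walk.getVert_cons_succ] at heq
      rw [Walk.getVert_zero] at heq
      exact hq.2 (Walk.mem_support_iff_exists_getVert.mpr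
        ⟨i, heq, by simpa using hi⟩)
    | i + 1, j + 1 =>
      rw [Walk.getVert_cons_succ, Walk.getVert_cons_succ] at heq
      have := ih hq.1 i j (by simpa using hi) (by simpa using hj) heq
      omega

lemma toSubgraph_nbr_aux {u v c x : V} {p : G.Walk u v}
    (h : p.toSubgraph.Adj c x) :
    ∃ j, j ≤ p.length ∧ p.getVert j = c ∧
      (x = p.getVert (j + 1) ∨ x = p.getVert (j - 1)) := by
  obtain ⟨i, hi, hlt⟩ := (Walk.toSubgraph_adj_iff p).mp h
  rw [Sym2.eq_iff] at hi
  rcases hi with ⟨h1, h2⟩ | ⟨h1, h2⟩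
  · exact ⟨i, hlt.le, h1, Or.inl h2.symm⟩
  · exact ⟨i + 1, hlt, h2, Or.inr (by simpa using h1.symm)⟩

/-- an interior vertex of a path has two distinct neighbours in the path. -/
lemma interior_two_nbrs {u v x : V} {p : G.Walk u v}
    (hp : p.IsPath) (hx : x ∈ p.support) (hxu : x ≠ u) (hxv : x ≠ v) :
    ∃ a b, a ≠ b ∧ p.toSubgraph.Adj x a ∧ p.toSubgraph.Adj x b := by
  induction p with
  | nil => simp at hx; exact absurd hx hxu
  | @cons a b c h q ih =>
    have hq := (Walk.cons_isPath_iff h q).mp hp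
    rw [Walk.support_cons, List.mem_cons] at hx
    rcases hx with rfl | hx
    · exact absurd rfl hxu
    by_cases hxb : x = b
    · subst hxb
      cases q with
      | nil => exact absurd rfl hxv
      | @cons _ z _ h2 q2 =>
        refine ⟨a, z, ?_, ?_, ?_⟩
        · rintro rfl
          refine hq.2 ?_
          rw [Walk.support_cons]
          exact List.mem_cons_of_mem _ (Walk.start_mem_support _)
        · exact Subgraph.sup_adj.mpr (Or.inl (by simp [h.symm]))
        · exact Subgraph.sup_adj.mpr (Or.inr (Subgraph.sup_adj.mpr (Or.inl (by simp [h2]))))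
    · obtain ⟨a', b', hab, ha, hb⟩ := ih hq.1 hx hxb hxv
      exact ⟨a', b', hab, Subgraph.sup_adj.mpr (Or.inr ha), Subgraph.sup_adj.mpr (Or.inr hb)⟩

/-- Key lemma: a set of vertices all adjacent to a common vertex `c`, each of whose
members has at most the two neighbours `c` and `f s`, is a monophonic position set. -/
lemma key_mpset (S : Set V) (c : V) (f : V → V)
    (hcS : c ∉ S)
    (hadjc : ∀ s ∈ S, G.Adj c s)
    (hnbr : ∀ s ∈ S, ∀ t, G.Adj s t → t = c ∨ t = f s) :
    G.IsMPSet S := by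
  intro u v p hmono
  obtain ⟨hpath, hind⟩ := hmono
  by_contra hcon
  push_neg at hcon
  have hfin : ({x ∈ S | x ∈ p.support}).Finite :=
    (p.support.finite_toSet).subset (fun x hx => hx.2)
  obtain ⟨s1, hs1, s2, hs2, s3, hs3, h12, h13, h23⟩ := (Set.two_lt_ncard hfin).mp hcon
  by_cases hc : c ∈ p.support
  · -- c has three distinct neighbours in the path
    have hA1 : p.toSubgraph.Adj c s1 := hind c s1 hc hs1.2 (hadjc s1 hs1.1)
    have hA2 : p.toSubgraph.Adj c s2 := hind c s2 hc hs2.2 (hadjc s2 hs2.1)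
    have hA3 : p.toSubgraph.Adj c s3 := hind c s3 hc hs3.2 (hadjc s3 hs3.1)
    obtain ⟨j1, hj1, hc1, hx1⟩ := toSubgraph_nbr_aux hA1
    obtain ⟨j2, hj2, hc2, hx2⟩ := toSubgraph_nbr_aux hA2
    obtain ⟨j3, hj3, hc3, hx3⟩ := toSubgraph_nbr_aux hA3
    have e12 : j1 = j2 := getVert_injOn_aux hpath j1 j2 hj1 hj2 (hc1.trans hc2.symm)
    have e13 : j1 = j3 := getVert_injOn_aux hpath j1 j3 hj1 hj3 (hc1.trans hc3.symm)
    subst e12; subst e13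
    rcases hx1 with rfl | rfl <;> rcases hx2 with rfl | rfl <;>
      rcases hx3 with h | h <;> simp_all
  · -- every sᵢ must be an endpoint of the path
    have hend : ∀ s ∈ ({x ∈ S | x ∈ p.support}), s = u ∨ s = v := by
      rintro s ⟨hsS, hsp⟩
      by_contra hor
      push_neg at hor
      obtain ⟨a', b', hab, ha, hb⟩ := interior_two_nbrs hpath hsp hor.1 hor.2
      have ha' : a' ∈ p.support := (p.mem_verts_toSubgraph).mp ha.snd_mem
      have hb' : b' ∈ p.support := (p.mem_verts_toSubgraph).mp hb.snd_mem
      have hga : G.Adj s a' := p.toSubgraph.adj_sub ha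
      have hgb : G.Adj s b' := p.toSubgraph.adj_sub hb
      rcases hnbr s hsS a' hga with rfl | rfl
      · exact hc ha'
      rcases hnbr s hsS b' hgb with rfl | h
      · exact hc hb'
      · exact hab h.symm
    rcases hend s1 ⟨hs1.1, hs1.2⟩ with rfl | rfl <;>
      rcases hend s2 ⟨hs2.1, hs2.2⟩ with rfl | rfl <;>
      rcases hend s3 ⟨hs3.1, hs3.2⟩ with rfl | rfl <;> simp_all

end Aux

lemma ncard_le_mpNum {V : Type*} [Fintype V] {G : SimpleGraph V} {S : Set V}
    (h : G.IsMPSet S) : S.ncard ≤ G.mpNum := by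
  apply le_csSup
  · refine ⟨Fintype.card V, ?_⟩
    rintro n ⟨T, _, rfl⟩
    calc T.ncard ≤ (Set.univ : Set V).ncard :=
          Set.ncard_le_ncard (Set.subset_univ T) Set.finite_univ
      _ = Fintype.card V := by simp [Set.ncard_univ]
  · exact ⟨S, h, rfl⟩

lemma side_bound_left {α β : Type*} [Fintype α] [Fintype β]
    (G : SimpleGraph α) (H : SimpleGraph β) {y : β} (hy : H.IsLeaf y) (u : α) :
    ({w : α | G.Adj u w ∧ G.IsLeaf w}).ncard ≤ (G □ H).mpNum := by
  obtain ⟨x₀, hx₀⟩ := Set.ncard_eq_one.mp hy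
  set L := {w : α | G.Adj u w ∧ G.IsLeaf w} with hL
  have hinj : Function.Injective (fun w : α => (w, y)) := fun a b h => by
    simpa using congrArg Prod.fst h
  have hcard : ((fun w : α => (w, y)) '' L).ncard = L.ncard :=
    Set.ncard_image_of_injective _ hinj
  rw [← hcard]
  apply ncard_le_mpNum
  apply key_mpset _ (u, y) (fun t => (t.1, x₀))
  · rintro ⟨w, ⟨hadj, _⟩, hw⟩
    have : w = u := congrArg Prod.fst hw
    exact G.irrefl (this ▸ hadj)
  · rintro s ⟨w, ⟨hadj, _⟩, rfl⟩
    exact boxProd_adj.mpr (Or.inl ⟨hadj, rfl⟩)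
  · rintro s ⟨w, ⟨hadj, hleaf⟩, rfl⟩ ⟨t1, t2⟩ ht
    rcases boxProd_adj.mp ht with ⟨h1, h2⟩ | ⟨h1, h2⟩
    · left
      have hu : u ∈ G.neighborSet w := hadj.symm
      obtain ⟨z, hz⟩ := Set.ncard_eq_one.mp hleaf
      rw [hz, Set.mem_singleton_iff] at hu
      have ht1 : t1 ∈ G.neighborSet w := h1
      rw [hz, Set.mem_singleton_iff] at ht1
      show (t1, t2) = (u, y)
      rw [Prod.mk.injEq]
      exact ⟨ht1.trans hu.symm, h2.symm⟩
    · right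
      have ht2 : t2 ∈ H.neighborSet y := h1
      rw [hx₀, Set.mem_singleton_iff] at ht2
      show (t1, t2) = (w, x₀)
      rw [Prod.mk.injEq]
      exact ⟨h2.symm, ht2⟩

lemma side_bound_right {α β : Type*} [Fintype α] [Fintype β]
    (G : SimpleGraph α) (H : SimpleGraph β) {y : α} (hy : G.IsLeaf y) (u : β) :
    ({w : β | H.Adj u w ∧ H.IsLeaf w}).ncard ≤ (G □ H).mpNum := by
  obtain ⟨x₀, hx₀⟩ := Set.ncard_eq_one.mp hy
  set L := {w : β | H.Adj u w ∧ H.IsLeaf w} with hL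
  have hinj : Function.Injective (fun w : β => (y, w)) := fun a b h => by
    simpa using congrArg Prod.snd h
  have hcard : ((fun w : β => (y, w)) '' L).ncard = L.ncard :=
    Set.ncard_image_of_injective _ hinj
  rw [← hcard]
  apply ncard_le_mpNum
  apply key_mpset _ (y, u) (fun t => (x₀, t.2))
  · rintro ⟨w, ⟨hadj, _⟩, hw⟩
    have : w = u := congrArg Prod.snd hw
    exact H.irrefl (this ▸ hadj)
  · rintro s ⟨w, ⟨hadj, _⟩, rfl⟩
    exact boxProd_adj.mpr (Or.inr ⟨hadj, rfl⟩)
  · rintro s ⟨w, ⟨hadj, hleaf⟩, rfl⟩ ⟨t1, t2⟩ ht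
    rcases boxProd_adj.mp ht with ⟨h1, h2⟩ | ⟨h1, h2⟩
    · right
      have ht1 : t1 ∈ G.neighborSet y := h1
      rw [hx₀, Set.mem_singleton_iff] at ht1
      show (t1, t2) = (x₀, w)
      rw [Prod.mk.injEq]
      exact ⟨ht1, h2.symm⟩
    · left
      have hu : u ∈ H.neighborSet w := hadj.symm
      obtain ⟨z, hz⟩ := Set.ncard_eq_one.mp hleaf
      rw [hz, Set.mem_singleton_iff] at hu
      have ht2 : t2 ∈ H.neighborSet w := h1
      rw [hz, Set.mem_singleton_iff] at ht2
      show (t1, t2) = (y, u)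
      rw [Prod.mk.injEq]
      exact ⟨h2.symm, ht2.trans hu.symm⟩


/-- If `G` and `H` are connected graphs of order at least three that both
contain a leaf, then `mp(G □ H) ≥ max {Δ₁(G), Δ₁(H)}`. -/
theorem mpNum_boxProd_ge_maxLeafDegree {α β : Type*} [Fintype α] [Fintype β]
    (G : SimpleGraph α) (H : SimpleGraph β) (hG : G.Connected) (hH : H.Connected)
    (hcardG : 3 ≤ Fintype.card α) (hcardH : 3 ≤ Fintype.card β)
    (hleafG : ∃ w : α, G.IsLeaf w) (hleafH : ∃ w : β, H.IsLeaf w) :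
    max G.maxLeafDegree H.maxLeafDegree ≤ (G □ H).mpNum := by
  obtain ⟨yH, hyH⟩ := hleafH
  obtain ⟨yG, hyG⟩ := hleafG
  apply max_le
  · exact Finset.sup_le fun u _ => side_bound_left G H hyH u
  · exact Finset.sup_le fun u _ => side_bound_right G H hyG u
end

section
/- Let G be a finite connected graph and H a finite graph. If S is a monophonic position set of the lexicographic product G ∘ H, then the projection π_G(S) = {g ∈ V(G) : (g,h) ∈ S for some h ∈ V(H)} is a monophonic position set of G. -/
open SimpleGraph

/-- The *lexicographic product* `G ∘ H`: `(g₁,h₁)` is adjacent to `(g₂,h₂)` iff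
`g₁ ~ g₂` in `G`, or `g₁ = g₂` and `h₁ ~ h₂` in `H`. -/
def SimpleGraph.lexProd {α β : Type*} (G : SimpleGraph α) (H : SimpleGraph β) :
    SimpleGraph (α × β) where
  Adj x y := G.Adj x.1 y.1 ∨ (x.1 = y.1 ∧ H.Adj x.2 y.2)
  symm := by
    constructor
    rintro x y (h | ⟨h1, h2⟩)
    · exact Or.inl h.symm
    · exact Or.inr ⟨h1.symm, h2.symm⟩
  loopless := by
    constructor
    rintro x (h | ⟨-, h⟩)
    · exact G.irrefl h
    · exact H.irrefl h

/-- If `S` is a monophonic position set of the lexicographic product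
`G ∘ H`, then `π_G(S)` is a monophonic position set of `G`. -/
theorem isMPSet_fst_image_of_isMPSet_lexProd {α β : Type*} [Fintype α] [Fintype β]
    (G : SimpleGraph α) (H : SimpleGraph β) (hG : G.Connected)
    (S : Set (α × β)) (hS : (G.lexProd H).IsMPSet S) :
    G.IsMPSet (Prod.fst '' S) := by
  classical
  intro u v p hp
  rcases S.eq_empty_or_nonempty with rfl | ⟨⟨g0, h0⟩, hg0⟩
  · simp
  set f : α → β := fun g => if h : ∃ y, (g, y) ∈ S then h.choose else h0 with hfdef
  have hf : ∀ g ∈ Prod.fst '' S, (g, f g) ∈ S := by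
    rintro g ⟨⟨g', y⟩, hy, rfl⟩
    have h : ∃ y, (g', y) ∈ S := ⟨y, hy⟩
    simpa [hfdef, dif_pos h] using h.choose_spec
  let φ : G →g G.lexProd H := ⟨fun g => (g, f g), fun hadj => Or.inl hadj⟩
  have hinj : Function.Injective φ := fun a b hab => congrArg Prod.fst hab
  have hq : (p.map φ).IsMonophonic := by
    constructor
    · exact Walk.map_isPath_of_injective hinj hp.1
    · intro a b ha hb hab
      rw [Walk.support_map] at ha hb
      obtain ⟨x, hx, rfl⟩ := List.mem_map.1 ha
      obtain ⟨y, hy, rfl⟩ := List.mem_map.1 hb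
      rcases hab with h | ⟨h1, h2⟩
      · have hadj := hp.2 x y hx hy h
        rw [Walk.toSubgraph_map]
        exact ⟨x, y, hadj, rfl, rfl⟩
      · exfalso
        have hxy : x = y := h1
        subst hxy
        exact H.irrefl h2
  have key := hS (p.map φ) hq
  calc {x ∈ Prod.fst '' S | x ∈ p.support}.ncard
      ≤ {x ∈ S | x ∈ (p.map φ).support}.ncard := by
        apply Set.ncard_le_ncard_of_injOn (fun g => (g, f g))
        · rintro g ⟨hgS, hgp⟩
          exact ⟨hf g hgS, by rw [Walk.support_map]; exact List.mem_map_of_mem hgp⟩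
        · intro a _ b _ hab; exact congrArg Prod.fst hab
    _ ≤ 2 := key
end

section
/- Let G and H be finite graphs. If S is a monophonic position set of the lexicographic product G ∘ H, then for any u ∈ π_G(S), the set {h ∈ V(H) : (u,h) ∈ S} is a monophonic position set of H. -/
open SimpleGraph

/-- If `S` is a monophonic position set of `G ∘ H`, then for any
`u ∈ π_G(S)`, the set `{h | (u,h) ∈ S}` is a monophonic position set of `H`. -/
theorem isMPSet_layer_of_isMPSet_lexProd {α β : Type*} [Fintype α] [Fintype β]
    (G : SimpleGraph α) (H : SimpleGraph β)
    (S : Set (α × β)) (hS : (G.lexProd H).IsMPSet S)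
    (u : α) (hu : u ∈ Prod.fst '' S) :
    H.IsMPSet {h : β | (u, h) ∈ S} := by
  intro a b p hp
  let f : H →g G.lexProd H := ⟨fun h => (u, h), fun h => Or.inr ⟨rfl, h⟩⟩
  have hinj : Function.Injective f := fun x y h => congrArg Prod.snd h
  have hmono : (p.map f).IsMonophonic := by
    constructor
    · exact p.map_isPath_of_injective hinj hp.1
    · rintro ⟨a1, a2⟩ ⟨b1, b2⟩ ha hb hadj
      rw [SimpleGraph.Walk.support_map, List.mem_map] at ha hb
      obtain ⟨a', ha', heqa⟩ := ha
      obtain ⟨b', hb', heqb⟩ := hb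
      rw [← heqa, ← heqb] at hadj ⊢
      have hH : H.Adj a' b' := by
        rcases hadj with h | ⟨_, h⟩
        · exact absurd h G.irrefl
        · exact h
      have := hp.2 a' b' ha' hb' hH
      rw [SimpleGraph.Walk.toSubgraph_map]
      exact ⟨a', b', this, rfl, rfl⟩
  have key := hS (p.map f) hmono
  have himg : (fun h => (u, h)) '' {x ∈ {h : β | (u, h) ∈ S} | x ∈ p.support}
      ⊆ {x ∈ S | x ∈ (p.map f).support} := by
    rintro ⟨x1, x2⟩ ⟨h, ⟨hS', hsup⟩, heq⟩
    refine ⟨by rw [← heq]; exact hS', ?_⟩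
    rw [SimpleGraph.Walk.support_map, List.mem_map]
    exact ⟨h, hsup, heq⟩
  calc ({x ∈ {h : β | (u, h) ∈ S} | x ∈ p.support}).ncard
      = ((fun h => (u, h)) '' {x ∈ {h : β | (u, h) ∈ S} | x ∈ p.support}).ncard := by
        rw [Set.ncard_image_of_injective _ (fun x y h => congrArg Prod.snd h)]
    _ ≤ ({x ∈ S | x ∈ (p.map f).support}).ncard :=
        Set.ncard_le_ncard himg (Set.toFinite _)
    _ ≤ 2 := key
end

section
/- Let G be a finite connected graph of order at least 2, let H be a finite graph with at least one vertex, and let 𝓜 be the collection of all monophonic position sets of G. For M ∈ 𝓜, let n_M be the number of vertices of M lying in components of the subgraph of G induced by M that have order at least 2, and let r_M be the number of components of the subgraph induced by M that consist of a single vertex. Then mp(G ∘ H) = max over M ∈ 𝓜 of (n_M·ω(H) + r_M·mp(H)). -/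
open SimpleGraph

section Machinery

variable {V V' : Type*} {Γ : SimpleGraph V} {Γ' : SimpleGraph V'}

lemma aux_support_getElem_eq {u v : V} (p : Γ.Walk u v) :
    ∀ (i : ℕ) (h : i < p.support.length), p.support[i] = p.getVert i := by
  induction p with
  | nil =>
    intro i h
    simp only [Walk.support_nil, List.length_singleton] at h
    obtain rfl : i = 0 := by omega
    rfl
  | cons h q ih =>
    intro i hi
    cases i with
    | zero => rfl
    | succ n =>
      simp only [Walk.support_cons, List.getElem_cons_succ, Walk.getVert_cons_succ]
      apply ih

lemma aux_getVert_mem {u v : V} (p : Γ.Walk u v) {i : ℕ} (hi : i ≤ p.length) :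
    p.getVert i ∈ p.support :=
  Walk.mem_support_iff_exists_getVert.mpr ⟨i, rfl, hi⟩

lemma aux_getVert_inj {u v : V} {p : Γ.Walk u v} (hp : p.IsPath) {i j : ℕ}
    (hi : i ≤ p.length) (hj : j ≤ p.length) (hij : p.getVert i = p.getVert j) : i = j := by
  have hnd := hp.support_nodup
  have h1 : i < p.support.length := by rw [Walk.length_support]; omega
  have h2 : j < p.support.length := by rw [Walk.length_support]; omega
  rw [← aux_support_getElem_eq p i h1, ← aux_support_getElem_eq p j h2] at hij
  exact (List.Nodup.getElem_inj_iff hnd).mp hij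

lemma aux_far_not_adj {u v : V} {p : Γ.Walk u v} (hp : p.IsMonophonic) {i j : ℕ}
    (hle : i + 2 ≤ j) (hj : j ≤ p.length) : ¬ Γ.Adj (p.getVert i) (p.getVert j) := by
  intro hadj
  have h2 := hp.2 _ _ (aux_getVert_mem p (by omega)) (aux_getVert_mem p hj) hadj
  rw [Walk.toSubgraph_adj_iff] at h2
  obtain ⟨k, hk, hklen⟩ := h2
  rw [Sym2.eq_iff] at hk
  rcases hk with ⟨ha, hb⟩ | ⟨ha, hb⟩
  · have e1 := aux_getVert_inj hp.1 (by omega) (by omega) ha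
    have e2 := aux_getVert_inj hp.1 (by omega) hj hb
    omega
  · have e1 := aux_getVert_inj hp.1 (by omega) hj ha
    have e2 := aux_getVert_inj hp.1 (by omega) (by omega) hb
    omega

lemma aux_length_eq_of_support_map {f : V → V'} {u v : V} {u' v' : V'}
    {p : Γ.Walk u v} {q : Γ'.Walk u' v'} (h : q.support = p.support.map f) :
    q.length = p.length := by
  have := congrArg List.length h
  simpa [Walk.length_support, List.length_map] using this

lemma aux_getVert_eq_of_support_map {f : V → V'} {u v : V} {u' v' : V'}
    {p : Γ.Walk u v} {q : Γ'.Walk u' v'} (h : q.support = p.support.map f)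
    {i : ℕ} (hi : i ≤ p.length) : q.getVert i = f (p.getVert i) := by
  have hlen := aux_length_eq_of_support_map h
  have hq : i < q.support.length := by rw [Walk.length_support]; omega
  have hp' : i < p.support.length := by rw [Walk.length_support]; omega
  calc q.getVert i = q.support[i] := (aux_support_getElem_eq q i hq).symm
    _ = (p.support.map f)[i]'(h ▸ hq) := List.getElem_of_eq h hq
    _ = f (p.support[i]) := List.getElem_map _
    _ = f (p.getVert i) := by rw [aux_support_getElem_eq p i hp']

lemma aux_mono_of_support_map {f : V → V'} {u v : V} {u' v' : V'}
    {p : Γ.Walk u v} {q : Γ'.Walk u' v'} (h : q.support = p.support.map f)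
    (hp : p.IsMonophonic) (hnd : q.support.Nodup)
    (hlift : ∀ a b, a ∈ p.support → b ∈ p.support → Γ'.Adj (f a) (f b) → Γ.Adj a b) :
    q.IsMonophonic := by
  refine ⟨(Walk.isPath_def q).mpr hnd, ?_⟩
  intro a' b' ha' hb' hadj
  rw [h, List.mem_map] at ha' hb'
  obtain ⟨a, ha, rfl⟩ := ha'
  obtain ⟨b, hb, rfl⟩ := hb'
  have hab : Γ.Adj a b := hlift a b ha hb hadj
  have h2 := hp.2 a b ha hb hab
  rw [Walk.toSubgraph_adj_iff] at h2
  obtain ⟨i, heq, hilen⟩ := h2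
  rw [Walk.toSubgraph_adj_iff]
  refine ⟨i, ?_, by rw [aux_length_eq_of_support_map h]; exact hilen⟩
  rw [aux_getVert_eq_of_support_map h (by omega), aux_getVert_eq_of_support_map h (by omega)]
  have := congrArg (Sym2.map f) heq
  simpa [Sym2.map_pair_eq] using this

end Machinery

section LexStruct

open SimpleGraph
variable {α β : Type*} {G : SimpleGraph α} {H : SimpleGraph β}

lemma aux_fst_const_of_run {u v : α × β} {p : (G.lexProd H).Walk u v}
    (hp : p.IsMonophonic) {i : ℕ} (hi : i + 1 ≤ p.length)
    (hrun : (p.getVert i).1 = (p.getVert (i + 1)).1) :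
    ∀ j ≤ p.length, (p.getVert j).1 = (p.getVert i).1 := by
  classical
  by_contra hcon
  push_neg at hcon
  obtain ⟨j, hj, hne⟩ := hcon
  have hji : j ≠ i := fun h => hne (by rw [h])
  have hji1 : j ≠ i + 1 := fun h => hne (by rw [h, ← hrun])
  rcases Nat.lt_or_ge j i with hlt | hge
  · -- j < i : take greatest k ≤ i with fst ≠ x
    set x := (p.getVert i).1 with hxdef
    set Q : ℕ → Prop := fun k => (p.getVert k).1 ≠ x with hQdef
    set k0 := Nat.findGreatest Q i with hk0def
    have hspec : Q k0 := Nat.findGreatest_spec (le_of_lt hlt) hne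
    have hk0le : k0 ≤ i := Nat.findGreatest_le i
    have hk0ne : k0 ≠ i := by
      intro h
      exact hspec (by rw [h])
    have hnext : (p.getVert (k0 + 1)).1 = x := by
      have := Nat.findGreatest_is_greatest (P := Q) (n := i) (k := k0 + 1)
        (by omega) (by omega)
      simpa [hQdef] using this
    have hadjG : G.Adj (p.getVert k0).1 x := by
      have hadj := p.adj_getVert_succ (i := k0) (by omega)
      rcases hadj with h | ⟨heq, _⟩
      · rwa [hnext] at h
      · exact absurd (heq.trans hnext) hspec
    refine aux_far_not_adj hp (i := k0) (j := i + 1) (by omega) hi ?_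
    exact Or.inl (by rw [← hrun]; exact hadjG)
  · -- j > i + 1 : take least k > i + 1 with fst ≠ x
    have hge' : i + 2 ≤ j := by omega
    set x := (p.getVert i).1 with hxdef
    have hQ : ∃ k, i + 1 < k ∧ k ≤ p.length ∧ (p.getVert k).1 ≠ x := ⟨j, by omega, hj, hne⟩
    set k0 := Nat.find hQ with hk0def
    obtain ⟨hk1, hk2, hk3⟩ := Nat.find_spec hQ
    have hprev : (p.getVert (k0 - 1)).1 = x := by
      rcases Nat.eq_or_lt_of_le (show i + 2 ≤ k0 by omega) with he | hlt'
      · have : k0 - 1 = i + 1 := by omega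
        rw [this, ← hrun]
      · have hmin := Nat.find_min hQ (m := k0 - 1) (by omega)
        push_neg at hmin
        exact hmin (by omega) (by omega)
    have hadjG : G.Adj x (p.getVert k0).1 := by
      have hadj := p.adj_getVert_succ (i := k0 - 1) (by omega)
      rw [show k0 - 1 + 1 = k0 by omega] at hadj
      rcases hadj with h | ⟨heq, _⟩
      · rwa [hprev] at h
      · exact absurd (by rw [← heq]; exact hprev) hk3
    exact aux_far_not_adj hp (i := i) (j := k0) (by omega) hk2 (Or.inl hadjG)

lemma aux_cherry {u v : α × β} {p : (G.lexProd H).Walk u v}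
    (hp : p.IsMonophonic) {i k : ℕ} (hik : i + 2 ≤ k) (hk : k ≤ p.length)
    (hx : (p.getVert i).1 = (p.getVert k).1)
    (hother : ∃ j ≤ p.length, (p.getVert j).1 ≠ (p.getVert i).1) :
    i = 0 ∧ k = 2 ∧ p.length = 2 ∧ G.Adj (p.getVert i).1 (p.getVert (i + 1)).1 ∧
      (p.getVert (i + 1)).1 ≠ (p.getVert i).1 := by
  set x := (p.getVert i).1 with hxdef
  have hmid_ne : (p.getVert (i + 1)).1 ≠ x := by
    intro h
    obtain ⟨j, hj, hne⟩ := hother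
    exact hne (aux_fst_const_of_run hp (by omega) h.symm j hj)
  have hadj1 : G.Adj x (p.getVert (i + 1)).1 := by
    have hadj := p.adj_getVert_succ (i := i) (by omega)
    rcases hadj with h | ⟨heq, _⟩
    · exact h
    · exact absurd heq.symm hmid_ne
  have hk2 : k = i + 2 := by
    by_contra hc
    have h3 : i + 1 + 2 ≤ k := by omega
    refine aux_far_not_adj hp h3 hk ?_
    exact Or.inl (by rw [← hx]; exact hadj1.symm)
  have hlen : p.length = k := by
    by_contra hc
    have hklt : k + 1 ≤ p.length := by omega
    by_cases ht : (p.getVert (k + 1)).1 = x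
    · have hrun : (p.getVert k).1 = (p.getVert (k + 1)).1 := by rw [ht, ← hx]
      have := aux_fst_const_of_run hp hklt hrun (i + 1) (by omega)
      rw [← hx] at this
      exact hmid_ne this
    · have hadj2 : G.Adj (p.getVert k).1 (p.getVert (k + 1)).1 := by
        have hadj := p.adj_getVert_succ (i := k) (by omega)
        rcases hadj with h | ⟨heq, _⟩
        · exact h
        · rw [← hx] at heq; exact absurd heq.symm ht
      refine aux_far_not_adj hp (i := i) (j := k + 1) (by omega) hklt ?_
      exact Or.inl (show G.Adj x _ by rw [hx]; exact hadj2)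
  have hi0 : i = 0 := by
    by_contra hc
    have hipos : 1 ≤ i := by omega
    by_cases hs : (p.getVert (i - 1)).1 = x
    · have hrun : (p.getVert (i - 1)).1 = (p.getVert (i - 1 + 1)).1 := by
        rw [show i - 1 + 1 = i by omega, hs]
      have := aux_fst_const_of_run hp (by omega) hrun (i + 1) (by omega)
      rw [hs] at this
      exact hmid_ne this
    · have hadj2 : G.Adj (p.getVert (i - 1)).1 x := by
        have hadj := p.adj_getVert_succ (i := i - 1) (by omega)
        rw [show i - 1 + 1 = i by omega] at hadj
        rcases hadj with h | ⟨heq, _⟩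
        · exact h
        · exact absurd heq hs
      refine aux_far_not_adj hp (i := i - 1) (j := k) (by omega) hk ?_
      exact Or.inl (hx ▸ hadj2)
  exact ⟨hi0, by omega, by omega, hadj1, hmid_ne⟩

lemma aux_exists_fiber_proj {x : α} :
    ∀ {u v : α × β} (p : (G.lexProd H).Walk u v), (∀ w ∈ p.support, w.1 = x) →
      ∃ q : H.Walk u.2 v.2, q.support = p.support.map Prod.snd := by
  intro u v p
  induction p with
  | nil => intro _; exact ⟨Walk.nil, by simp⟩
  | @cons a b c h q ih =>
    intro hfib
    obtain ⟨q', hq'⟩ := ih (fun w hw => hfib w (by simp [hw]))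
    have hax : a.1 = x := hfib a (by simp)
    have hbx : b.1 = x := hfib b (by simp [Walk.support_cons])
    have hadj : H.Adj a.2 b.2 := by
      rcases h with h | ⟨_, h⟩
      · rw [hax, hbx] at h; exact absurd h (G.irrefl)
      · exact h
    exact ⟨Walk.cons hadj q', by simp [hq']⟩

lemma aux_exists_base_proj :
    ∀ {u v : α × β} (p : (G.lexProd H).Walk u v), (p.support.map Prod.fst).Nodup →
      ∃ q : G.Walk u.1 v.1, q.support = p.support.map Prod.fst := by
  intro u v p
  induction p with
  | nil => intro _; exact ⟨Walk.nil, by simp⟩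
  | @cons a b c h q ih =>
    intro hnd
    rw [Walk.support_cons, List.map_cons] at hnd
    obtain ⟨q', hq'⟩ := ih hnd.of_cons
    have hne : a.1 ≠ b.1 := by
      intro he
      have hb : b.1 ∈ q.support.map Prod.fst := List.mem_map_of_mem q.start_mem_support
      rw [← he] at hb
      exact (List.nodup_cons.mp hnd).1 hb
    have hadj : G.Adj a.1 b.1 := by
      rcases h with h | ⟨he, _⟩
      · exact h
      · exact absurd he hne
    exact ⟨Walk.cons hadj q', by simp [hq', Walk.support_cons]⟩

end LexStruct

section Misc

open SimpleGraph

lemma aux_sort3 {P : ℕ → Prop} {i j k : ℕ} (hij : i ≠ j) (hik : i ≠ k) (hjk : j ≠ k)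
    (hi : P i) (hj : P j) (hk : P k) :
    ∃ a b c : ℕ, a < b ∧ b < c ∧ P a ∧ P b ∧ P c := by
  rcases Nat.lt_or_ge i j with h1 | h1
  · rcases Nat.lt_or_ge j k with h2 | h2
    · exact ⟨i, j, k, h1, h2, hi, hj, hk⟩
    · rcases Nat.lt_or_ge i k with h3 | h3
      · exact ⟨i, k, j, h3, by omega, hi, hk, hj⟩
      · exact ⟨k, i, j, by omega, h1, hk, hi, hj⟩
  · rcases Nat.lt_or_ge j k with h2 | h2
    · rcases Nat.lt_or_ge i k with h3 | h3
      · exact ⟨j, i, k, by omega, h3, hj, hi, hk⟩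
      · exact ⟨j, k, i, h2, by omega, hj, hk, hi⟩
    · exact ⟨k, j, i, by omega, by omega, hk, hj, hi⟩

variable {V : Type*} {Γ : SimpleGraph V}

lemma aux_mpSet_empty : Γ.IsMPSet (∅ : Set V) := by
  intro u v p _
  have : {x ∈ (∅ : Set V) | x ∈ p.support} = ∅ := by simp
  rw [this]
  simp

lemma aux_mp_nonempty : {n | ∃ S : Set V, Γ.IsMPSet S ∧ S.ncard = n}.Nonempty :=
  ⟨0, ∅, aux_mpSet_empty, by simp⟩

lemma aux_bddAbove_mp [Fintype V] :
    BddAbove {n | ∃ S : Set V, Γ.IsMPSet S ∧ S.ncard = n} := by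
  refine ⟨Fintype.card V, ?_⟩
  rintro n ⟨S, _, rfl⟩
  have := Set.ncard_le_ncard (Set.subset_univ S) (Set.toFinite _)
  simpa [Set.ncard_univ, Nat.card_eq_fintype_card] using this

lemma aux_ncard_le_mpNum [Fintype V] {S : Set V} (h : Γ.IsMPSet S) :
    S.ncard ≤ Γ.mpNum :=
  le_csSup aux_bddAbove_mp ⟨S, h, rfl⟩

lemma aux_exists_mpSet_card [Fintype V] :
    ∃ S : Set V, Γ.IsMPSet S ∧ S.ncard = Γ.mpNum :=
  Nat.sSup_mem aux_mp_nonempty aux_bddAbove_mp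

end Misc

section Fibers

open SimpleGraph

variable {α β : Type*} [Finite α] [Finite β] {G : SimpleGraph α} {H : SimpleGraph β}

lemma aux_fiber_clique {S : Set (α × β)} (hS : (G.lexProd H).IsMPSet S)
    {x y : α} (hxy : G.Adj x y) {k : β} (hyk : (y, k) ∈ S) {h1 h2 : β}
    (hh1 : (x, h1) ∈ S) (hh2 : (x, h2) ∈ S) (hne : h1 ≠ h2) : H.Adj h1 h2 := by
  by_contra hH
  have a1 : (G.lexProd H).Adj (x, h1) (y, k) := Or.inl hxy
  have a2 : (G.lexProd H).Adj (y, k) (x, h2) := Or.inl hxy.symm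
  set p : (G.lexProd H).Walk (x, h1) (x, h2) := Walk.cons a1 (Walk.cons a2 Walk.nil) with hpdef
  have hxyne : x ≠ y := G.ne_of_adj hxy
  have hsupp : p.support = [(x, h1), (y, k), (x, h2)] := by simp [hpdef]
  have hmono : p.IsMonophonic := by
    constructor
    · rw [Walk.isPath_def, hsupp]
      have d1 : (x, h1) ≠ (y, k) := fun h => hxyne (congrArg Prod.fst h)
      have d2 : (x, h1) ≠ (x, h2) := fun h => hne (congrArg Prod.snd h)
      have d3 : (y, k) ≠ (x, h2) := fun h => hxyne (congrArg Prod.fst h).symm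
      simp [d1, d2, d3]
    · intro a b ha hb hadj
      rw [hsupp] at ha hb
      simp only [List.mem_cons, List.mem_singleton, List.not_mem_nil, or_false] at ha hb
      have hbad : ¬ (G.lexProd H).Adj (x, h1) (x, h2) := by
        rintro (h | ⟨_, h⟩)
        · exact G.irrefl h
        · exact hH h
      rcases ha with rfl | rfl | rfl <;> rcases hb with rfl | rfl | rfl
      · exact absurd hadj ((G.lexProd H).irrefl)
      · simp [hpdef, Walk.toSubgraph]
      · exact absurd hadj hbad
      · simp [hpdef, Walk.toSubgraph]
      · exact absurd hadj ((G.lexProd H).irrefl)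
      · simp [hpdef, Walk.toSubgraph]
      · exact absurd hadj (fun h => hbad h.symm)
      · simp [hpdef, Walk.toSubgraph]
      · exact absurd hadj ((G.lexProd H).irrefl)
  have hle := hS p hmono
  have h3 : 2 < {w ∈ S | w ∈ p.support}.ncard := by
    rw [Set.two_lt_ncard (Set.toFinite _)]
    refine ⟨(x, h1), ⟨hh1, by rw [hsupp]; simp⟩, (y, k), ⟨hyk, by rw [hsupp]; simp⟩,
      (x, h2), ⟨hh2, by rw [hsupp]; simp⟩, ?_, ?_, ?_⟩
    · intro h; exact hxyne (congrArg Prod.fst h)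
    · intro h; exact hne (congrArg Prod.snd h)
    · intro h; exact hxyne (congrArg Prod.fst h).symm
  omega

lemma aux_fiber_mp {S : Set (α × β)} (hS : (G.lexProd H).IsMPSet S) (x : α) :
    H.IsMPSet {h | (x, h) ∈ S} := by
  intro u v q hq
  let f : H →g (G.lexProd H) := ⟨fun h => (x, h), fun {a b} h => Or.inr ⟨rfl, h⟩⟩
  have hinj : Function.Injective f := fun a b h => congrArg Prod.snd h
  have hsupp : (q.map f).support = q.support.map f := Walk.support_map f q
  have hmono : (q.map f).IsMonophonic := by
    refine aux_mono_of_support_map hsupp hq ?_ ?_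
    · rw [hsupp]
      exact hq.1.support_nodup.map hinj
    · intro a b _ _ hadj
      rcases hadj with h | ⟨_, h⟩
      · exact absurd h G.irrefl
      · exact h
  have hle := hS (q.map f) hmono
  have himg : (fun h => (x, h)) '' {h ∈ {h | (x, h) ∈ S} | h ∈ q.support}
      ⊆ {w ∈ S | w ∈ (q.map f).support} := by
    rintro w ⟨h, ⟨hh1, hh2⟩, rfl⟩
    exact ⟨hh1, by rw [hsupp]; exact List.mem_map_of_mem hh2⟩
  calc {h ∈ {h | (x, h) ∈ S} | h ∈ q.support}.ncard
      = ((fun h => (x, h)) '' {h ∈ {h | (x, h) ∈ S} | h ∈ q.support}).ncard :=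
        (Set.ncard_image_of_injective _ (fun a b h => congrArg Prod.snd h)).symm
    _ ≤ {w ∈ S | w ∈ (q.map f).support}.ncard := Set.ncard_le_ncard himg (Set.toFinite _)
    _ ≤ 2 := hle

lemma aux_proj_mpSet [Nonempty β] {S : Set (α × β)} (hS : (G.lexProd H).IsMPSet S) :
    G.IsMPSet (Prod.fst '' S) := by
  intro u v q hq
  by_contra hc
  push_neg at hc
  rw [Set.two_lt_ncard (Set.toFinite _)] at hc
  obtain ⟨x1, hx1, x2, hx2, x3, hx3, h12, h13, h23⟩ := hc
  have hσ : ∀ g : α, ∃ h : β, g ∈ Prod.fst '' S → (g, h) ∈ S := by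
    intro g
    by_cases hg : g ∈ Prod.fst '' S
    · obtain ⟨w, hw, hwg⟩ := hg
      exact ⟨w.2, fun _ => by rw [← hwg]; exact hw⟩
    · exact ⟨Classical.arbitrary β, fun h => absurd h hg⟩
  choose σ hσ using hσ
  let f : G →g (G.lexProd H) := ⟨fun g => (g, σ g), fun {a b} h => Or.inl h⟩
  have hinj : Function.Injective f := fun a b h => congrArg Prod.fst h
  have hsupp : (q.map f).support = q.support.map f := Walk.support_map f q
  have hmono : (q.map f).IsMonophonic := by
    refine aux_mono_of_support_map hsupp hq ?_ ?_
    · rw [hsupp]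
      exact hq.1.support_nodup.map hinj
    · intro a b _ _ hadj
      rcases hadj with h | ⟨he, h⟩
      · exact h
      · have : a = b := he
        subst this
        exact absurd h H.irrefl
  have hle := hS (q.map f) hmono
  have h3 : 2 < {w ∈ S | w ∈ (q.map f).support}.ncard := by
    rw [Set.two_lt_ncard (Set.toFinite _)]
    refine ⟨f x1, ⟨hσ x1 hx1.1, by rw [hsupp]; exact List.mem_map_of_mem hx1.2⟩,
      f x2, ⟨hσ x2 hx2.1, by rw [hsupp]; exact List.mem_map_of_mem hx2.2⟩,
      f x3, ⟨hσ x3 hx3.1, by rw [hsupp]; exact List.mem_map_of_mem hx3.2⟩, ?_, ?_, ?_⟩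
    · intro h; exact h12 (congrArg Prod.fst h)
    · intro h; exact h13 (congrArg Prod.fst h)
    · intro h; exact h23 (congrArg Prod.fst h)
  omega

end Fibers

section Construct

open SimpleGraph

variable {α β : Type*} [Finite α] [Finite β] {G : SimpleGraph α} {H : SimpleGraph β}

lemma aux_constructed_mpSet {M : Set α} (hM : G.IsMPSet M)
    (K W : Set β) (hK : ∀ a ∈ K, ∀ b ∈ K, a ≠ b → H.Adj a b) (hW : H.IsMPSet W) :
    (G.lexProd H).IsMPSet
      (({x ∈ M | ∃ y ∈ M, G.Adj x y} ×ˢ K) ∪ ({x ∈ M | ∀ y ∈ M, ¬ G.Adj x y} ×ˢ W)) := by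
  set A : Set α := {x ∈ M | ∃ y ∈ M, G.Adj x y} with hAdef
  set B : Set α := {x ∈ M | ∀ y ∈ M, ¬ G.Adj x y} with hBdef
  set S : Set (α × β) := (A ×ˢ K) ∪ (B ×ˢ W) with hSdef
  have hAB : ∀ x, x ∈ A → x ∈ B → False := by
    rintro x ⟨hxM, y, hyM, hadj⟩ ⟨-, hB⟩
    exact hB y hyM hadj
  have hfiber : ∀ w ∈ S, (w.1 ∈ A ∧ w.2 ∈ K) ∨ (w.1 ∈ B ∧ w.2 ∈ W) := by
    rintro w (hw | hw)
    · exact Or.inl ⟨hw.1, hw.2⟩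
    · exact Or.inr ⟨hw.1, hw.2⟩
  have hSMem : ∀ w ∈ S, w.1 ∈ M := by
    intro w hw
    rcases hfiber w hw with ⟨h, -⟩ | ⟨h, -⟩
    · exact h.1
    · exact h.1
  intro u v p hp
  by_contra hc
  push_neg at hc
  rw [Set.two_lt_ncard (Set.toFinite _)] at hc
  obtain ⟨a, ⟨haS, haSup⟩, b, ⟨hbS, hbSup⟩, c, ⟨hcS, hcSup⟩, hab, hac, hbc⟩ := hc
  obtain ⟨ia, hia1, hia2⟩ := Walk.mem_support_iff_exists_getVert.mp haSup
  obtain ⟨ib, hib1, hib2⟩ := Walk.mem_support_iff_exists_getVert.mp hbSup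
  obtain ⟨ic, hic1, hic2⟩ := Walk.mem_support_iff_exists_getVert.mp hcSup
  have hiab : ia ≠ ib := fun h => hab (by rw [← hia1, ← hib1, h])
  have hiac : ia ≠ ic := fun h => hac (by rw [← hia1, ← hic1, h])
  have hibc : ib ≠ ic := fun h => hbc (by rw [← hib1, ← hic1, h])
  have hP : ∀ n ∈ ({ia, ib, ic} : Set ℕ), n ≤ p.length ∧ p.getVert n ∈ S := by
    rintro n (rfl | rfl | rfl)
    · exact ⟨hia2, hia1.symm ▸ haS⟩
    · exact ⟨hib2, hib1.symm ▸ hbS⟩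
    · exact ⟨hic2, hic1.symm ▸ hcS⟩
  obtain ⟨i, j, k, hij, hjk, ⟨hilen, hiS⟩, ⟨hjlen, hjS⟩, ⟨hklen, hkS⟩⟩ :=
    aux_sort3 (P := fun n => n ≤ p.length ∧ p.getVert n ∈ S) hiab hiac hibc
      (hP ia (by simp)) (hP ib (by simp)) (hP ic (by simp))
  -- the cherry-kill sub-lemma
  have key : ∀ s t r : ℕ, s < t → t ≤ p.length → r ≤ p.length →
      (p.getVert s).1 = (p.getVert t).1 → (p.getVert r).1 ≠ (p.getVert s).1 →
      p.getVert s ∈ S → p.getVert t ∈ S → p.getVert r ∈ S → False := by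
    intro s t r hst ht hr hfst hrne hsS htS hrS
    rcases Nat.lt_or_ge t (s + 2) with hts | hts
    · -- t = s + 1 : a run, so all fibres equal, contradiction with r
      have ht1 : t = s + 1 := by omega
      subst ht1
      exact hrne (aux_fst_const_of_run hp ht hfst r hr)
    · obtain ⟨hs0, ht2, hlen2, hadjG, hmidne⟩ :=
        aux_cherry hp hts ht hfst ⟨r, hr, hrne⟩
      subst hs0
      subst ht2
      have hr1 : r = 1 := by
        have hr2 : r ≤ 2 := by omega
        interval_cases r
        · exact absurd rfl hrne
        · rfl
        · exact absurd hfst.symm hrne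
      subst hr1
      have hyM : (p.getVert 1).1 ∈ M := hSMem _ hrS
      have hsA : (p.getVert 0).1 ∈ A ∧ (p.getVert 0).2 ∈ K := by
        rcases hfiber _ hsS with h | ⟨hB, -⟩
        · exact h
        · exact absurd hadjG (hB.2 _ hyM)
      have htK : (p.getVert 2).2 ∈ K := by
        rcases hfiber _ htS with h | ⟨hB, -⟩
        · exact h.2
        · exact (hAB _ (hfst ▸ hsA.1) hB).elim
      have hne : (p.getVert 0).2 ≠ (p.getVert 2).2 := by
        intro h
        have heq02 : p.getVert 0 = p.getVert 2 := Prod.ext hfst h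
        exact absurd (aux_getVert_inj hp.1 (by omega) ht heq02) (by omega)
      have hadjH : H.Adj (p.getVert 0).2 (p.getVert 2).2 := hK _ hsA.2 _ htK hne
      exact aux_far_not_adj hp hts ht (Or.inr ⟨hfst, hadjH⟩)
  have hdij : p.getVert i ≠ p.getVert j :=
    fun h => absurd (aux_getVert_inj hp.1 (by omega) hjlen h) (by omega)
  have hdik : p.getVert i ≠ p.getVert k :=
    fun h => absurd (aux_getVert_inj hp.1 (by omega) hklen h) (by omega)
  have hdjk : p.getVert j ≠ p.getVert k :=
    fun h => absurd (aux_getVert_inj hp.1 (by omega) hklen h) (by omega)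
  by_cases e1 : (p.getVert i).1 = (p.getVert j).1
  · by_cases e2 : (p.getVert i).1 = (p.getVert k).1
    · -- all three in the same fibre
      by_cases hoth : ∃ t ≤ p.length, (p.getVert t).1 ≠ (p.getVert i).1
      · obtain ⟨t, ht, htne⟩ := hoth
        obtain ⟨hs0, ht2, hlen2, hadjG, hmidne⟩ :=
          aux_cherry hp (show i + 2 ≤ k by omega) hklen e2 ⟨t, ht, htne⟩
        exact hmidne (by rw [show i + 1 = j by omega]; exact e1.symm)
      · push_neg at hoth
        rcases hfiber _ hiS with ⟨hA, hKi⟩ | ⟨hB, hWi⟩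
        · -- clique fibre
          have hkK : (p.getVert k).2 ∈ K := by
            rcases hfiber _ hkS with h | ⟨hB', -⟩
            · exact h.2
            · exact absurd (hAB _ (e2 ▸ hA) hB') (fun h => h)
          have hne2 : (p.getVert i).2 ≠ (p.getVert k).2 :=
            fun h => hdik (Prod.ext e2 h)
          exact aux_far_not_adj hp (by omega) hklen
            (Or.inr ⟨e2, hK _ hKi _ hkK hne2⟩)
        · -- mp fibre : the whole walk stays in the fibre
          have hallfib : ∀ w ∈ p.support, w.1 = (p.getVert i).1 := by
            intro w hw
            obtain ⟨n, rfl, hn⟩ := Walk.mem_support_iff_exists_getVert.mp hw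
            exact hoth n hn
          obtain ⟨q, hq⟩ := aux_exists_fiber_proj p hallfib
          have hqnd : q.support.Nodup := by
            rw [hq]
            refine List.Nodup.map_on ?_ hp.1.support_nodup
            intro w1 h1 w2 h2 hsnd
            exact Prod.ext ((hallfib w1 h1).trans (hallfib w2 h2).symm) hsnd
          have hqmono : q.IsMonophonic := by
            refine aux_mono_of_support_map hq hp hqnd ?_
            intro w1 w2 h1 h2 hadj
            exact Or.inr ⟨(hallfib w1 h1).trans (hallfib w2 h2).symm, hadj⟩
          have hle := hW q hqmono
          have hWmem : ∀ n, n ≤ p.length → p.getVert n ∈ S → (p.getVert n).2 ∈ W := by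
            intro n hn hnS
            rcases hfiber _ hnS with ⟨hA', -⟩ | h
            · exact absurd (hAB _ hA' ((hoth n hn) ▸ hB)) (fun h => h)
            · exact h.2
          have hsup2 : ∀ n, n ≤ p.length → (p.getVert n).2 ∈ q.support := by
            intro n hn
            rw [hq]
            exact List.mem_map_of_mem (aux_getVert_mem p hn)
          have h3 : 2 < {z ∈ W | z ∈ q.support}.ncard := by
            rw [Set.two_lt_ncard (Set.toFinite _)]
            refine ⟨(p.getVert i).2, ⟨hWmem i (by omega) hiS, hsup2 i (by omega)⟩,
              (p.getVert j).2, ⟨hWmem j (by omega) hjS, hsup2 j (by omega)⟩,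
              (p.getVert k).2, ⟨hWmem k (by omega) hkS, hsup2 k (by omega)⟩, ?_, ?_, ?_⟩
            · exact fun h => hdij (Prod.ext e1 h)
            · exact fun h => hdik (Prod.ext e2 h)
            · exact fun h => hdjk (Prod.ext (e1 ▸ e2) h)
          omega
    · exact key i j k hij hjlen hklen e1 (fun h => e2 h.symm) hiS hjS hkS
  · by_cases e2 : (p.getVert i).1 = (p.getVert k).1
    · exact key i k j (by omega) hklen hjlen e2 (fun h => e1 h.symm) hiS hkS hjS
    · by_cases e3 : (p.getVert j).1 = (p.getVert k).1
      · exact key j k i hjk hklen (by omega) e3 (fun h => e1 h) hjS hkS hiS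
      · -- all three fibres distinct : projection to G is a monophonic path
        have hfstinj : ∀ s t, s < t → t ≤ p.length →
            (p.getVert s).1 ≠ (p.getVert t).1 := by
          intro s t hst ht heq
          rcases Nat.lt_or_ge t (s + 2) with hts | hts
          · have ht1 : t = s + 1 := by omega
            subst ht1
            have hconst := aux_fst_const_of_run hp ht heq
            exact e1 ((hconst i (by omega)).trans (hconst j (by omega)).symm)
          · have hother : ∃ r ≤ p.length, (p.getVert r).1 ≠ (p.getVert s).1 := by
              by_cases hri : (p.getVert i).1 = (p.getVert s).1
              · exact ⟨j, by omega, fun h => e1 (hri.trans h.symm)⟩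
              · exact ⟨i, by omega, hri⟩
            obtain ⟨hs0, ht2, hlen2, -, -⟩ := aux_cherry hp hts ht heq hother
            have hi0 : i = 0 := by omega
            have hk2 : k = 2 := by omega
            apply e2
            rw [hi0, hk2]
            rw [hs0, ht2] at heq
            exact heq
        have hnodup : (p.support.map Prod.fst).Nodup := by
          refine List.Nodup.map_on ?_ hp.1.support_nodup
          intro w1 h1 w2 h2 hfst
          obtain ⟨n1, rfl, hn1⟩ := Walk.mem_support_iff_exists_getVert.mp h1
          obtain ⟨n2, rfl, hn2⟩ := Walk.mem_support_iff_exists_getVert.mp h2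
          rcases Nat.lt_trichotomy n1 n2 with h | h | h
          · exact absurd hfst (hfstinj n1 n2 h hn2)
          · rw [h]
          · exact absurd hfst.symm (hfstinj n2 n1 h hn1)
        obtain ⟨q, hq⟩ := aux_exists_base_proj p hnodup
        have hqmono : q.IsMonophonic := by
          refine aux_mono_of_support_map hq hp (hq ▸ hnodup) ?_
          intro w1 w2 _ _ hadj
          exact Or.inl hadj
        have hle := hM q hqmono
        have hsup1 : ∀ n, n ≤ p.length → (p.getVert n).1 ∈ q.support := by
          intro n hn
          rw [hq]
          exact List.mem_map_of_mem (aux_getVert_mem p hn)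
        have h3 : 2 < {z ∈ M | z ∈ q.support}.ncard := by
          rw [Set.two_lt_ncard (Set.toFinite _)]
          exact ⟨(p.getVert i).1, ⟨hSMem _ hiS, hsup1 i (by omega)⟩,
            (p.getVert j).1, ⟨hSMem _ hjS, hsup1 j (by omega)⟩,
            (p.getVert k).1, ⟨hSMem _ hkS, hsup1 k (by omega)⟩, e1, e2, e3⟩
        omega

end Construct

section Counting

open SimpleGraph

variable {α β : Type*} [Fintype α] [Fintype β] {G : SimpleGraph α} {H : SimpleGraph β}

lemma aux_ncard_prod (s : Set α) (t : Set β) : (s ×ˢ t).ncard = s.ncard * t.ncard := by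
  classical
  rw [Set.ncard_eq_toFinset_card', Set.ncard_eq_toFinset_card', Set.ncard_eq_toFinset_card',
    Set.toFinset_prod]
  exact Finset.card_product _ _

lemma aux_sum_ite_ncard (A : Set α) (c : ℕ) [DecidablePred (· ∈ A)] :
    ∑ x : α, (if x ∈ A then c else 0) = A.ncard * c := by
  rw [Set.ncard_eq_toFinset_card', ← Finset.sum_filter, Finset.sum_const, smul_eq_mul]
  congr 2
  ext x
  simp

lemma aux_card_le {S : Set (α × β)} (hS : (G.lexProd H).IsMPSet S) :
    S.ncard ≤ ({x ∈ Prod.fst '' S | ∃ y ∈ Prod.fst '' S, G.Adj x y}).ncard * H.cliqueNum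
      + ({x ∈ Prod.fst '' S | ∀ y ∈ Prod.fst '' S, ¬ G.Adj x y}).ncard * H.mpNum := by
  classical
  set M : Set α := Prod.fst '' S with hMdef
  set A : Set α := {x ∈ M | ∃ y ∈ M, G.Adj x y} with hAdef
  set B : Set α := {x ∈ M | ∀ y ∈ M, ¬ G.Adj x y} with hBdef
  have hfib : ∀ x : α, ({h : β | (x, h) ∈ S}).ncard ≤
      (if x ∈ A then H.cliqueNum else 0) + (if x ∈ B then H.mpNum else 0) := by
    intro x
    by_cases hxA : x ∈ A
    · have hABx : x ∉ B := by
        obtain ⟨hxM, y, hyM, hxy⟩ := hxA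
        rintro ⟨-, hB⟩
        exact hB y hyM hxy
      rw [if_pos hxA, if_neg hABx, add_zero]
      obtain ⟨hxM, y, hyM, hxy⟩ := hxA
      obtain ⟨w, hwS, hwy⟩ := hyM
      have hclique : H.IsClique (({h : β | (x, h) ∈ S}).toFinset : Set β) := by
        intro h1 hh1 h2 hh2 hne
        rw [Finset.mem_coe, Set.mem_toFinset] at hh1 hh2
        exact aux_fiber_clique hS hxy (k := w.2) (by rw [show (y, w.2) = w from Prod.ext hwy.symm rfl]; exact hwS) hh1 hh2 hne
      rw [Set.ncard_eq_toFinset_card']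
      exact SimpleGraph.IsClique.card_le_cliqueNum (tc := hclique)
    · by_cases hxB : x ∈ B
      · rw [if_neg hxA, if_pos hxB, zero_add]
        exact aux_ncard_le_mpNum (aux_fiber_mp hS x)
      · rw [if_neg hxA, if_neg hxB, add_zero]
        have hxM : x ∉ M := by
          intro hxM
          by_cases h : ∃ y ∈ M, G.Adj x y
          · exact hxA ⟨hxM, h⟩
          · push_neg at h
            exact hxB ⟨hxM, h⟩
        have hemp : {h : β | (x, h) ∈ S} = ∅ := by
          ext h
          simp only [Set.mem_setOf_eq, Set.mem_empty_iff_false, iff_false]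
          intro hxh
          exact hxM ⟨(x, h), hxh, rfl⟩
        rw [hemp]
        simp
  have hsum : S.ncard = ∑ x : α, ({h : β | (x, h) ∈ S}).ncard := by
    rw [Set.ncard_eq_toFinset_card',
      Finset.card_eq_sum_card_fiberwise (f := fun w => w.1) (t := Finset.univ)
        (fun _ _ => Finset.mem_univ _)]
    apply Finset.sum_congr rfl
    intro x _
    rw [Set.ncard_eq_toFinset_card']
    have himg : S.toFinset.filter (fun w => w.1 = x)
        = ({h : β | (x, h) ∈ S}).toFinset.image (fun h => (x, h)) := by
      ext w
      simp only [Finset.mem_filter, Set.mem_toFinset, Finset.mem_image, Set.mem_setOf_eq]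
      constructor
      · rintro ⟨hwS, hwx⟩
        exact ⟨w.2, by rw [show (x, w.2) = w from Prod.ext hwx.symm rfl]; exact hwS,
          Prod.ext hwx.symm rfl⟩
      · rintro ⟨h, hhS, rfl⟩
        exact ⟨hhS, rfl⟩
    rw [himg, Finset.card_image_of_injective _ (fun a b h => congrArg Prod.snd h)]
  rw [hsum]
  calc ∑ x : α, ({h : β | (x, h) ∈ S}).ncard
      ≤ ∑ x : α, ((if x ∈ A then H.cliqueNum else 0) + (if x ∈ B then H.mpNum else 0)) :=
        Finset.sum_le_sum (fun x _ => hfib x)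
    _ = A.ncard * H.cliqueNum + B.ncard * H.mpNum := by
        rw [Finset.sum_add_distrib, aux_sum_ite_ncard, aux_sum_ite_ncard]

end Counting

/-- For a connected graph `G` of order at least 2 and a graph `H` with at
least one vertex, `mp(G ∘ H)` equals the maximum over all monophonic position sets `M`
of `G` of `n_M·ω(H) + r_M·mp(H)`, where `n_M` is the number of vertices of `M` lying in
components of `G[M]` of order at least 2 (i.e. having a neighbour in `M`) and `r_M` is
the number of singleton components of `G[M]` (i.e. vertices of `M` with no neighbour
in `M`). -/
theorem mpNum_lexProd {α β : Type*} [Fintype α] [Fintype β] [Nonempty β]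
    (G : SimpleGraph α) (H : SimpleGraph β) (hG : G.Connected)
    (hcard : 2 ≤ Fintype.card α) :
    (G.lexProd H).mpNum =
      sSup {n : ℕ | ∃ M : Set α, G.IsMPSet M ∧
        n = ({x ∈ M | ∃ y ∈ M, G.Adj x y}).ncard * H.cliqueNum
          + ({x ∈ M | ∀ y ∈ M, ¬ G.Adj x y}).ncard * H.mpNum} := by

  classical
  set T := {n : ℕ | ∃ M : Set α, G.IsMPSet M ∧
      n = ({x ∈ M | ∃ y ∈ M, G.Adj x y}).ncard * H.cliqueNum
        + ({x ∈ M | ∀ y ∈ M, ¬ G.Adj x y}).ncard * H.mpNum} with hTdef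
  have hTne : T.Nonempty := ⟨0, ∅, aux_mpSet_empty, by simp⟩
  have hbddT : BddAbove T := by
    refine ⟨Fintype.card α * (H.cliqueNum + H.mpNum), ?_⟩
    rintro n ⟨M, hMmp, rfl⟩
    have hA : ({x ∈ M | ∃ y ∈ M, G.Adj x y}).ncard ≤ Fintype.card α := by
      have := Set.ncard_le_ncard (Set.subset_univ {x ∈ M | ∃ y ∈ M, G.Adj x y}) (Set.toFinite _)
      simpa [Set.ncard_univ, Nat.card_eq_fintype_card] using this
    have hB : ({x ∈ M | ∀ y ∈ M, ¬ G.Adj x y}).ncard ≤ Fintype.card α := by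
      have := Set.ncard_le_ncard (Set.subset_univ {x ∈ M | ∀ y ∈ M, ¬ G.Adj x y}) (Set.toFinite _)
      simpa [Set.ncard_univ, Nat.card_eq_fintype_card] using this
    calc ({x ∈ M | ∃ y ∈ M, G.Adj x y}).ncard * H.cliqueNum
          + ({x ∈ M | ∀ y ∈ M, ¬ G.Adj x y}).ncard * H.mpNum
        ≤ Fintype.card α * H.cliqueNum + Fintype.card α * H.mpNum :=
          Nat.add_le_add (Nat.mul_le_mul_right _ hA) (Nat.mul_le_mul_right _ hB)
      _ = Fintype.card α * (H.cliqueNum + H.mpNum) := (Nat.mul_add _ _ _).symm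
  apply le_antisymm
  · obtain ⟨S, hS, hScard⟩ := aux_exists_mpSet_card (Γ := G.lexProd H)
    rw [← hScard]
    have hM : G.IsMPSet (Prod.fst '' S) := aux_proj_mpSet hS
    have hmem : ({x ∈ Prod.fst '' S | ∃ y ∈ Prod.fst '' S, G.Adj x y}).ncard * H.cliqueNum
        + ({x ∈ Prod.fst '' S | ∀ y ∈ Prod.fst '' S, ¬ G.Adj x y}).ncard * H.mpNum ∈ T :=
      ⟨Prod.fst '' S, hM, rfl⟩
    exact le_trans (aux_card_le hS) (le_csSup hbddT hmem)
  · apply csSup_le hTne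
    rintro n ⟨M, hMmp, rfl⟩
    obtain ⟨KF, hKF⟩ := H.exists_isNClique_cliqueNum
    obtain ⟨W, hWmp, hWcard⟩ := aux_exists_mpSet_card (Γ := H)
    have hKclique : ∀ a ∈ (↑KF : Set β), ∀ b ∈ (↑KF : Set β), a ≠ b → H.Adj a b :=
      fun a ha b hb hne => hKF.1 ha hb hne
    have hmp := aux_constructed_mpSet hMmp (↑KF : Set β) W hKclique hWmp
    refine le_trans (le_of_eq ?_) (aux_ncard_le_mpNum hmp)
    have hdisj : Disjoint ({x ∈ M | ∃ y ∈ M, G.Adj x y} ×ˢ (↑KF : Set β))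
        ({x ∈ M | ∀ y ∈ M, ¬ G.Adj x y} ×ˢ W) := by
      rw [Set.disjoint_left]
      rintro w ⟨⟨hwM, y, hyM, hadj⟩, -⟩ ⟨⟨-, hB⟩, -⟩
      exact hB y hyM hadj
    rw [Set.ncard_union_eq hdisj (Set.toFinite _) (Set.toFinite _),
      aux_ncard_prod, aux_ncard_prod, Set.ncard_coe_finset, hKF.2, hWcard]
end
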